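/- Let n ≥ 2 and m ≥ 2, let g: [0,1] → ℝ be positive and strictly decreasing, let κ > 0 and f̄ ∈ (0,1], and let r_crit be the minimizer of χ(r) = (1 - (1 - r^{1/m})^{1/n})/r on (0,1], assumed to lie in (0,1). If additionally m ≥ 3, then the function M(r) = κ·g(r·f̄)·m·n·r^{2 - 1/m}·(1 - r^{1/m})^{1 - 1/n} is strictly decreasing on [r_crit, 1). -/

import Mathlib

open Real Set

lemma auxE2 : Real.exp 2 < 7.3890561 := by
  have h := Real.exp_one_lt_d9
  have h2 : Real.exp 2 = Real.exp 1 * Real.exp 1 := by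
    rw [← Real.exp_add]; norm_num
  nlinarith [Real.exp_pos 1]

lemma auxN4 (m n : ℕ) (hm : 3 ≤ m) (hn : 2 ≤ n) :
    ((n:ℝ) - 1) * (1 + (2*(m:ℝ)-1)/((m:ℝ)*((n:ℝ)-1)))^n < 2*(m:ℝ)*(n:ℝ) - 1 := by
  have hmR : (3:ℝ) ≤ (m:ℝ) := by exact_mod_cast hm
  have hnR : (2:ℝ) ≤ (n:ℝ) := by exact_mod_cast hn
  obtain ⟨K, hKdef⟩ : ∃ K:ℝ, K = (n:ℝ) - 1 := ⟨_, rfl⟩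
  rw [← hKdef]
  have hK1 : (1:ℝ) ≤ K := by rw [hKdef]; linarith
  have hK0 : (0:ℝ) < K := by linarith
  have hm0 : (0:ℝ) < (m:ℝ) := by linarith
  obtain ⟨t, htdef⟩ : ∃ t:ℝ, t = (2*(m:ℝ)-1)/((m:ℝ)*K) := ⟨_, rfl⟩
  rw [← htdef]
  have ht0 : 0 ≤ t := htdef ▸ div_nonneg (by linarith) (by positivity)
  have h3 : ((n-1:ℕ):ℝ) = K := by
    rw [hKdef]; push_cast [Nat.cast_sub (by omega : 1 ≤ n)]; ring
  have h4 : K * t = 2 - 1/(m:ℝ) := by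
    rw [htdef]; field_simp
  have hexp : (1 + t)^n ≤ Real.exp (2 - 1/(m:ℝ)) * (1 + t) := by
    have h1 : (1 + t)^(n-1) ≤ (Real.exp t)^(n-1) :=
      pow_le_pow_left₀ (by linarith) (by linarith [Real.add_one_le_exp t]) _
    have e : (Real.exp t)^(n-1) = Real.exp (2 - 1/(m:ℝ)) := by
      rw [← Real.exp_nat_mul, h3, h4]
    have h6 : (1+t)^(n-1) ≤ Real.exp (2 - 1/(m:ℝ)) := by rw [← e]; exact h1
    have h5 : (1+t)^n = (1+t)^(n-1) * (1+t) := by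
      rw [← pow_succ]; congr 1; omega
    rw [h5]
    exact mul_le_mul_of_nonneg_right h6 (by linarith)
  rcases lt_or_ge ((m:ℝ)) 4 with hm4 | hm4
  · -- m = 3
    have hm3' : (m:ℝ) = 3 := by
      have : m < 4 := by exact_mod_cast hm4
      have : m = 3 := by omega
      rw [this]; norm_num
    rcases lt_or_ge ((n:ℝ)) 11 with hn11 | hn11
    · -- small n : 2 ≤ n ≤ 10
      have ht : t = 5/(3*K) := by rw [htdef, hm3']; norm_num
      have hn' : n < 11 := by exact_mod_cast hn11
      rw [ht, hm3']
      interval_cases n <;> (rw [hKdef] <;> norm_num)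
    · -- large n
      have h1 : Real.exp (2 - 1/(m:ℝ)) ≤ Real.exp 2 * (3/4) := by
        rw [hm3']
        have e13 : (4/3:ℝ) ≤ Real.exp (1/3) := by
          have := Real.add_one_le_exp (1/3:ℝ); linarith
        have he : Real.exp (2 - 1/3) * Real.exp (1/3) = Real.exp 2 := by
          rw [← Real.exp_add]; norm_num
        nlinarith [Real.exp_pos (2 - 1/3 : ℝ), Real.exp_pos (1/3 : ℝ)]
      have hKt : K * (1 + t) = K + 5/3 := by
        have h4' : K * t = 5/3 := by rw [h4, hm3']; norm_num
        rw [mul_add, mul_one, h4']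
      have key : K * ((1+t)^n) ≤ Real.exp 2 * (3/4) * (K + 5/3) := by
        calc K * ((1+t)^n) ≤ K * (Real.exp (2 - 1/(m:ℝ)) * (1+t)) :=
              mul_le_mul_of_nonneg_left hexp hK0.le
          _ = Real.exp (2 - 1/(m:ℝ)) * (K * (1+t)) := by ring
          _ ≤ Real.exp 2 * (3/4) * (K + 5/3) := by
              rw [hKt]; exact mul_le_mul_of_nonneg_right h1 (by linarith)
      have hE := auxE2
      have hlt : Real.exp 2 * (3/4) * (K + 5/3) < 7.3890561 * (3/4) * (K + 5/3) := by
        have hp : (0:ℝ) < (3/4) * (K + 5/3) := by linarith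
        nlinarith
      have hnn : (n:ℝ) = K + 1 := by rw [hKdef]; ring
      have hg : 2*(m:ℝ)*(n:ℝ) - 1 = 6*K + 5 := by rw [hm3', hnn]; ring
      have hn11' : (10:ℝ) ≤ K := by rw [hKdef]; linarith
      linarith
  · -- m ≥ 4
    rcases lt_or_ge ((n:ℝ)) 14 with hn14 | hn14
    · -- small n: bound t < 2/K
      have ht2 : t < 2/K := by
        rw [htdef, div_lt_div_iff₀ (by positivity) hK0]
        nlinarith
      have hlt : (1+t)^n < (1+2/K)^n :=
        pow_lt_pow_left₀ (by linarith) (by linarith) (by omega)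
      have hn' : n < 14 := by exact_mod_cast hn14
      have hmain : K * (1+2/K)^n ≤ 8*(n:ℝ) - 7 := by
        interval_cases n <;> (rw [hKdef] <;> norm_num)
      have hmul : K * (1+t)^n < K * (1+2/K)^n :=
        mul_lt_mul_of_pos_left hlt hK0
      have h8 : 8*(n:ℝ) - 1 ≤ 2*(m:ℝ)*n - 1 := by nlinarith
      linarith
    · -- large n
      have h1 : Real.exp (2 - 1/(m:ℝ)) ≤ Real.exp 2 := by
        apply Real.exp_le_exp.2
        have : 0 < 1/(m:ℝ) := by positivity
        linarith
      have hKt : K * (1 + t) = K + (2 - 1/(m:ℝ)) := by rw [mul_add, mul_one, h4]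
      have key : K * ((1+t)^n) ≤ Real.exp 2 * (K + 2) := by
        calc K * ((1+t)^n) ≤ K * (Real.exp (2 - 1/(m:ℝ)) * (1+t)) :=
              mul_le_mul_of_nonneg_left hexp hK0.le
          _ = Real.exp (2 - 1/(m:ℝ)) * (K * (1+t)) := by ring
          _ ≤ Real.exp 2 * (K + 2) := by
              rw [hKt]
              have him : 1/(m:ℝ) ≤ 1 := by rw [div_le_one hm0]; linarith
              have h2 : K + (2 - 1/(m:ℝ)) ≤ K + 2 := by
                have : 0 < 1/(m:ℝ) := by positivity
                linarith
              exact mul_le_mul h1 h2 (by linarith) (Real.exp_pos 2).le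
      have hE := auxE2
      have hlt : Real.exp 2 * (K + 2) < 7.3890561 * (K + 2) :=
        mul_lt_mul_of_pos_right hE (by linarith)
      have hnn : (n:ℝ) = K + 1 := by rw [hKdef]; ring
      have h8 : 8*K + 7 ≤ 2*(m:ℝ)*(n:ℝ) - 1 := by nlinarith
      have hn14' : (13:ℝ) ≤ K := by rw [hKdef]; linarith
      linarith

lemma auxL4 (m n : ℕ) (hm : 3 ≤ m) (hn : 2 ≤ n) :
    ((m:ℝ)*n - 1) * (((n:ℝ)-1)/(2*(m:ℝ)*(n:ℝ)-1)) + 1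
      < (m:ℝ)*n * ((((n:ℝ)-1)/(2*(m:ℝ)*(n:ℝ)-1)) ^ ((1:ℝ) - 1/(n:ℝ))) := by
  have hmR : (3:ℝ) ≤ (m:ℝ) := by exact_mod_cast hm
  have hnR : (2:ℝ) ≤ (n:ℝ) := by exact_mod_cast hn
  set D : ℝ := 2*(m:ℝ)*(n:ℝ)-1 with hDdef
  set a : ℝ := ((n:ℝ)-1)/D with hadef
  have hD : (0:ℝ) < D := by rw [hDdef]; nlinarith
  have hK : (0:ℝ) < (n:ℝ)-1 := by linarith
  have ha : 0 < a := div_pos hK hD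
  set P : ℝ := (m:ℝ)*(n:ℝ)+(m:ℝ)-1 with hPdef
  have hP : (0:ℝ) < P := by rw [hPdef]; nlinarith
  -- nat-power form of the numeric inequality
  have hN4' : P^n < (m:ℝ)^n * ((n:ℝ)-1)^(n-1) * D := by
    have h := auxN4 m n hm hn
    set B : ℝ := (m:ℝ)*((n:ℝ)-1) with hBdef
    have hB : (0:ℝ) < B := by rw [hBdef]; nlinarith
    have h1t : 1 + (2*(m:ℝ)-1)/((m:ℝ)*((n:ℝ)-1)) = P / B := by
      rw [hPdef, hBdef]; field_simp; ring
    rw [h1t, div_pow, ← mul_div_assoc] at h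
    have h2 : ((n:ℝ)-1) * P^n < D * B^n := (div_lt_iff₀ (by positivity)).mp h
    have hBn : B^n = (m:ℝ)^n * (((n:ℝ)-1)^(n-1) * ((n:ℝ)-1)) := by
      rw [hBdef, mul_pow, ← pow_succ]
      congr 2
      omega
    rw [hBn] at h2
    have h3 : ((n:ℝ)-1) * P^n < ((n:ℝ)-1) * ((m:ℝ)^n * ((n:ℝ)-1)^(n-1) * D) := by
      calc ((n:ℝ)-1) * P^n < D * ((m:ℝ)^n * (((n:ℝ)-1)^(n-1) * ((n:ℝ)-1))) := h2
        _ = ((n:ℝ)-1) * ((m:ℝ)^n * ((n:ℝ)-1)^(n-1) * D) := by ring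
    exact lt_of_mul_lt_mul_left h3 hK.le
  -- reduce to nth powers
  have hRpos : (0:ℝ) < (m:ℝ)*n * (a ^ ((1:ℝ) - 1/(n:ℝ))) := by
    have := Real.rpow_pos_of_pos ha ((1:ℝ) - 1/(n:ℝ))
    nlinarith
  refine lt_of_pow_lt_pow_left₀ n hRpos.le ?_
  have hq : (a ^ ((1:ℝ)-1/(n:ℝ))) ^ n = a ^ (n-1) := by
    rw [← Real.rpow_natCast (a ^ ((1:ℝ)-1/(n:ℝ))) n, ← Real.rpow_mul ha.le]
    have he : ((1:ℝ)-1/(n:ℝ)) * (n:ℕ) = ((n-1:ℕ):ℝ) := by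
      push_cast [Nat.cast_sub (by omega : 1 ≤ n)]
      field_simp
    rw [he, Real.rpow_natCast]
  have hLHS : ((m:ℝ)*n - 1) * a + 1 = (n:ℝ)*P/D := by
    rw [hadef, hPdef]; field_simp; ring
  rw [hLHS, mul_pow, hq, div_pow, mul_pow]
  rw [hadef, div_pow]
  rw [div_lt_iff₀ (by positivity : (0:ℝ) < D^n)]
  have hDn : D^n = D^(n-1) * D := by rw [← pow_succ]; congr 1; omega
  have hstep := mul_lt_mul_of_pos_right hN4'
    (show (0:ℝ) < (n:ℝ)^n / D^(n-1) by positivity)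
  have hc : (m:ℝ)^n * ((n:ℝ)-1)^(n-1) * D * ((n:ℝ)^n / D^(n-1))
      = (m:ℝ)^n * (n:ℝ)^n * (((n:ℝ)-1)^(n-1) / D^(n-1)) * D := by
    field_simp
  rw [hc] at hstep
  calc (n:ℝ)^n * P^n = P^n * ((n:ℝ)^n / D^(n-1)) * D^(n-1) := by
        field_simp
    _ < ((m:ℝ)^n * (n:ℝ)^n * (((n:ℝ)-1)^(n-1) / D^(n-1)) * D) * D^(n-1) := by
        apply mul_lt_mul_of_pos_right hstep (by positivity)
    _ = (m:ℝ)^n * (n:ℝ)^n * (((n:ℝ)-1)^(n-1) / D^(n-1)) * D^n := by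
        rw [hDn]; ring
    _ = ((m:ℝ)*(n:ℝ))^n * (((n:ℝ)-1)^(n-1) / D^(n-1)) * D^n := by
        rw [mul_pow]

lemma auxL3 (m n : ℕ) (hm : 3 ≤ m) (hn : 2 ≤ n) (v : ℝ)
    (hv1 : ((n:ℝ)-1)/(2*(m:ℝ)*(n:ℝ)-1) ≤ v) (hv2 : v < 1) :
    ((m:ℝ)*n - 1) * v + 1 < (m:ℝ)*n * v ^ ((1:ℝ) - 1/(n:ℝ)) := by
  have hmR : (3:ℝ) ≤ (m:ℝ) := by exact_mod_cast hm
  have hnR : (2:ℝ) ≤ (n:ℝ) := by exact_mod_cast hn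
  set q : ℝ := (1:ℝ) - 1/(n:ℝ) with hqdef
  have hq0 : 0 < q := by
    rw [hqdef]; have : 1/(n:ℝ) ≤ 1/2 := by
      apply div_le_div_of_nonneg_left <;> linarith
    linarith
  have hq1 : q < 1 := by
    rw [hqdef]; have : 0 < 1/(n:ℝ) := by positivity
    linarith
  set a : ℝ := ((n:ℝ)-1)/(2*(m:ℝ)*(n:ℝ)-1) with hadef
  have hD : (0:ℝ) < 2*(m:ℝ)*(n:ℝ)-1 := by nlinarith
  have ha0 : 0 < a := by rw [hadef]; apply div_pos <;> nlinarith
  have ha1 : a < 1 := by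
    rw [hadef, div_lt_one hD]; nlinarith
  obtain ⟨lam, hlamdef⟩ : ∃ L:ℝ, L = (1-v)/(1-a) := ⟨_, rfl⟩
  have hlam0 : 0 < lam := by rw [hlamdef]; apply div_pos <;> linarith
  have hlam1 : lam ≤ 1 := by
    rw [hlamdef, div_le_one (by linarith)]; linarith
  have hane : (1:ℝ) - a ≠ 0 := by linarith
  have hvrep : lam * a + (1-lam) * 1 = v := by
    rw [hlamdef]; field_simp; ring
  have hcc : ConcaveOn ℝ (Set.Ici 0) (fun x : ℝ => x ^ q) :=
    Real.concaveOn_rpow hq0.le hq1.le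
  have hkey := hcc.2 (Set.mem_Ici.2 ha0.le) (Set.mem_Ici.2 zero_le_one)
    hlam0.le (by linarith : 0 ≤ 1 - lam) (by ring)
  simp only [smul_eq_mul] at hkey
  rw [hvrep] at hkey
  -- hkey : lam * a^q + (1-lam) * 1^q ≤ v^q
  rw [Real.one_rpow] at hkey
  have hL4 := auxL4 m n hm hn
  rw [← hadef, ← hqdef] at hL4
  -- multiply hL4 by lam
  have h2 := mul_lt_mul_of_pos_left hL4 hlam0
  nlinarith [h2, hkey, hlam0, hlam1]

lemma auxL2 (m n : ℕ) (hm : 3 ≤ m) (hn : 2 ≤ n) :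
    StrictAntiOn (fun u : ℝ => (1 - (1-u) ^ ((1:ℝ)/(n:ℝ))) / u^m)
      (Set.Ioc 0 ((n:ℝ)*(2*(m:ℝ)-1)/(2*(m:ℝ)*(n:ℝ)-1))) := by
  have hmR : (3:ℝ) ≤ (m:ℝ) := by exact_mod_cast hm
  have hnR : (2:ℝ) ≤ (n:ℝ) := by exact_mod_cast hn
  have hD : (0:ℝ) < 2*(m:ℝ)*(n:ℝ)-1 := by nlinarith
  obtain ⟨c, hcdef⟩ : ∃ c:ℝ, c = (n:ℝ)*(2*(m:ℝ)-1)/(2*(m:ℝ)*(n:ℝ)-1) := ⟨_, rfl⟩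
  rw [← hcdef]
  have hc0 : 0 < c := by rw [hcdef]; apply div_pos <;> nlinarith
  have hc1 : c < 1 := by rw [hcdef, div_lt_one hD]; nlinarith
  have hca : 1 - c = ((n:ℝ)-1)/(2*(m:ℝ)*(n:ℝ)-1) := by
    rw [hcdef, eq_div_iff hD.ne', sub_mul, div_mul_cancel₀ _ hD.ne']; ring
  apply strictAntiOn_of_deriv_neg (convex_Ioc 0 c)
  · -- continuity
    apply ContinuousOn.div
    · apply ContinuousOn.sub continuousOn_const
      intro x hx
      apply ContinuousAt.continuousWithinAt
      have h1 : ContinuousAt (fun u : ℝ => 1 - u) x := by fun_prop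
      have h2 : ContinuousAt (fun y : ℝ => y ^ ((1:ℝ)/(n:ℝ))) (1-x) :=
        Real.continuousAt_rpow_const _ _ (Or.inr (by positivity))
      exact h2.comp h1
    · exact (continuous_pow m).continuousOn
    · intro x hx
      exact pow_ne_zero m (ne_of_gt hx.1)
  · intro x hx
    rw [interior_Ioc] at hx
    obtain ⟨hx0, hxc⟩ := hx
    have hx1 : x < 1 := lt_trans hxc hc1
    have h1x : (0:ℝ) < 1 - x := by linarith
    -- derivative computation
    have h1 : HasDerivAt (fun u : ℝ => 1 - u) (-1) x := (hasDerivAt_id x).const_sub 1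
    have h2 : HasDerivAt (fun u : ℝ => (1-u) ^ ((1:ℝ)/(n:ℝ)))
        (-1 * ((1:ℝ)/(n:ℝ)) * (1-x) ^ ((1:ℝ)/(n:ℝ) - 1)) x :=
      h1.rpow_const (Or.inl (ne_of_gt h1x))
    have h3 : HasDerivAt (fun u : ℝ => 1 - (1-u) ^ ((1:ℝ)/(n:ℝ)))
        (-(-1 * ((1:ℝ)/(n:ℝ)) * (1-x) ^ ((1:ℝ)/(n:ℝ) - 1))) x := h2.const_sub 1
    have h4 : HasDerivAt (fun u : ℝ => u^m) ((m:ℝ)*x^(m-1)) x := by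
      simpa using hasDerivAt_pow m x
    have h5 : HasDerivAt (fun u : ℝ => (1 - (1-u) ^ ((1:ℝ)/(n:ℝ))) / u^m) _ x :=
      h3.div h4 (pow_ne_zero m (ne_of_gt hx0))
    rw [h5.deriv]
    apply div_neg_of_neg_of_pos
    · -- numerator negative
      have hxm : x^m = x^(m-1) * x := by rw [← pow_succ]; congr 1; omega
      -- abbreviations
      obtain ⟨v, hvdef⟩ : ∃ v:ℝ, v = 1 - x := ⟨_, rfl⟩
      have hv0 : 0 < v := by rw [hvdef]; linarith
      have hv1 : v < 1 := by rw [hvdef]; linarith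
      have hva : ((n:ℝ)-1)/(2*(m:ℝ)*(n:ℝ)-1) ≤ v := by
        rw [← hca, hvdef]; linarith
      obtain ⟨A, hAdef⟩ : ∃ A:ℝ, A = v ^ ((1:ℝ)/(n:ℝ)) := ⟨_, rfl⟩
      obtain ⟨B, hBdef⟩ : ∃ B:ℝ, B = v ^ ((1:ℝ) - 1/(n:ℝ)) := ⟨_, rfl⟩
      have hA0 : 0 < A := hAdef ▸ Real.rpow_pos_of_pos hv0 _
      have hB0 : 0 < B := hBdef ▸ Real.rpow_pos_of_pos hv0 _
      have hAB : A * B = v := by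
        rw [hAdef, hBdef, ← Real.rpow_add hv0]
        norm_num
      have hA1 : A < 1 := by
        rw [hAdef]
        exact Real.rpow_lt_one hv0.le hv1 (by positivity)
      have hAv : (1-x) ^ ((1:ℝ)/(n:ℝ) - 1) = A / v := by
        rw [← hvdef, Real.rpow_sub hv0, Real.rpow_one, hAdef]
      have hL3 := auxL3 m n hm hn v hva hv1
      rw [← hBdef] at hL3
      -- key scalar inequality : (1/n) * (A/v) * x < m * (1 - A)
      have hkey : (1:ℝ)/(n:ℝ) * (A/v) * x < (m:ℝ) * (1 - A) := by
        have hNB : (0:ℝ) < (n:ℝ) * B := by positivity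
        have e1 : (1:ℝ)/(n:ℝ) * (A/v) * x * ((n:ℝ)*B) = x := by
          have hvne : v ≠ 0 := ne_of_gt hv0
          have hnne : (n:ℝ) ≠ 0 := by positivity
          field_simp
          linear_combination hAB
        have e2 : (m:ℝ) * (1 - A) * ((n:ℝ)*B) = (m:ℝ)*(n:ℝ)*(B - v) := by
          linear_combination (-((m:ℝ)*(n:ℝ)))*hAB
        have hxv : x = 1 - v := by rw [hvdef]; ring
        have hfin : (1:ℝ)/(n:ℝ) * (A/v) * x * ((n:ℝ)*B) < (m:ℝ) * (1 - A) * ((n:ℝ)*B) := by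
          rw [e1, e2, hxv]; linarith
        exact lt_of_mul_lt_mul_right hfin hNB.le
      have hxp : (0:ℝ) < x^(m-1) := pow_pos hx0 _
      have hAx : (1-x) ^ ((1:ℝ)/(n:ℝ)) = A := by rw [hAdef, hvdef]
      rw [hAx, hAv, hxm]
      nlinarith [mul_lt_mul_of_pos_left hkey hxp]
    · positivity

lemma auxL1 (m n : ℕ) (hm : 3 ≤ m) (hn : 2 ≤ n) :
    StrictAntiOn (fun u : ℝ => u^(2*m-1) * (1-u) ^ ((1:ℝ) - 1/(n:ℝ)))
      (Set.Icc ((n:ℝ)*(2*(m:ℝ)-1)/(2*(m:ℝ)*(n:ℝ)-1)) 1) := by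
  have hmR : (3:ℝ) ≤ (m:ℝ) := by exact_mod_cast hm
  have hnR : (2:ℝ) ≤ (n:ℝ) := by exact_mod_cast hn
  have hD : (0:ℝ) < 2*(m:ℝ)*(n:ℝ)-1 := by nlinarith
  have hq0 : (0:ℝ) < 1 - 1/(n:ℝ) := by
    have : 1/(n:ℝ) ≤ 1/2 := by apply div_le_div_of_nonneg_left <;> linarith
    linarith
  obtain ⟨c, hcdef⟩ : ∃ c:ℝ, c = (n:ℝ)*(2*(m:ℝ)-1)/(2*(m:ℝ)*(n:ℝ)-1) := ⟨_, rfl⟩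
  rw [← hcdef]
  have hc0 : 0 < c := by rw [hcdef]; apply div_pos <;> nlinarith
  apply strictAntiOn_of_deriv_neg (convex_Icc c 1)
  · apply ContinuousOn.mul (continuous_pow _).continuousOn
    intro x hx
    apply ContinuousAt.continuousWithinAt
    have h1 : ContinuousAt (fun u : ℝ => 1 - u) x := by fun_prop
    have h2 : ContinuousAt (fun y : ℝ => y ^ ((1:ℝ) - 1/(n:ℝ))) (1-x) :=
      Real.continuousAt_rpow_const _ _ (Or.inr hq0.le)
    exact h2.comp h1
  · intro x hx
    rw [interior_Icc] at hx
    obtain ⟨hxc, hx1⟩ := hx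
    have hx0 : 0 < x := lt_trans hc0 hxc
    have h1x : (0:ℝ) < 1 - x := by linarith
    have h1 : HasDerivAt (fun u : ℝ => u^(2*m-1)) ((2*m-1:ℕ) * x^(2*m-1-1)) x :=
      hasDerivAt_pow (2*m-1) x
    have h0 : HasDerivAt (fun u : ℝ => 1 - u) (-1) x := (hasDerivAt_id x).const_sub 1
    have h2 : HasDerivAt (fun u : ℝ => (1-u) ^ ((1:ℝ) - 1/(n:ℝ)))
        (-1 * ((1:ℝ) - 1/(n:ℝ)) * (1-x) ^ ((1:ℝ) - 1/(n:ℝ) - 1)) x :=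
      h0.rpow_const (Or.inl (ne_of_gt h1x))
    have h5 : HasDerivAt (fun u : ℝ => u^(2*m-1) * (1-u) ^ ((1:ℝ) - 1/(n:ℝ))) _ x :=
      h1.mul h2
    rw [h5.deriv]
    obtain ⟨E, hEdef⟩ : ∃ E:ℝ, E = (1-x) ^ ((1:ℝ) - 1/(n:ℝ) - 1) := ⟨_, rfl⟩
    have hE0 : 0 < E := hEdef ▸ Real.rpow_pos_of_pos h1x _
    have hQ : (1-x) ^ ((1:ℝ) - 1/(n:ℝ)) = E * (1-x) := by
      rw [hEdef, ← Real.rpow_add_one (ne_of_gt h1x)]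
      congr 1; ring
    have hX : x^(2*m-1) = x^(2*m-1-1) * x := by rw [← pow_succ]; congr 1; omega
    have hxp : 0 < x^(2*m-1-1) := pow_pos hx0 _
    have hkey : ((2*m-1:ℕ):ℝ)*(1-x) - ((1:ℝ) - 1/(n:ℝ))*x < 0 := by
      have hcx : c < x := hxc
      rw [hcdef] at hcx
      have hp : ((2*m-1:ℕ):ℝ) = 2*(m:ℝ)-1 := by
        push_cast [Nat.cast_sub (by omega : 1 ≤ 2*m)]; ring
      rw [hp]
      rw [div_lt_iff₀ hD] at hcx
      have hn0 : (0:ℝ) < (n:ℝ) := by linarith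
      rw [← sub_neg]
      have h9 : (2*(m:ℝ)-1)*(1-x)*(n:ℝ) - (1 - 1/(n:ℝ))*x*(n:ℝ) < 0 := by
        have e : (1 - 1/(n:ℝ))*x*(n:ℝ) = ((n:ℝ)-1)*x := by field_simp
        rw [e]; nlinarith
      nlinarith
    rw [hQ, hX, ← hEdef]
    linarith [mul_neg_of_pos_of_neg (mul_pos hxp hE0) hkey]

/-- Marginal benefit along the physical-consistency curve.
For `n ≥ 2`, `m ≥ 3` (in particular `m ≥ 2`), `g` positive and strictly decreasing on
`[0,1]`, `κ > 0`, `f̄ ∈ (0,1]`, and `r_crit ∈ (0,1)` a minimizer of `χ` on `(0,1]`,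
the map `M(r) = κ·g(r·f̄)·m·n·r^{2-1/m}·(1-r^{1/m})^{1-1/n}` is strictly decreasing
on `[r_crit, 1)`. -/
theorem stmt18 (m n : ℕ) (hn : 2 ≤ n) (hm : 2 ≤ m) (hm3 : 3 ≤ m)
    (g : ℝ → ℝ) (hgpos : ∀ y ∈ Set.Icc (0:ℝ) 1, 0 < g y)
    (hganti : StrictAntiOn g (Set.Icc (0:ℝ) 1))
    (κ : ℝ) (hκ : 0 < κ) (f : ℝ) (hf : f ∈ Set.Ioc (0:ℝ) 1)
    (χ : ℝ → ℝ)
    (hχ : ∀ r ∈ Set.Ioc (0:ℝ) 1,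
      χ r = (1 - (1 - r ^ ((1:ℝ) / (m:ℝ))) ^ ((1:ℝ) / (n:ℝ))) / r)
    (rcrit : ℝ) (hrc : rcrit ∈ Set.Ioo (0:ℝ) 1)
    (hmin : ∀ r ∈ Set.Ioc (0:ℝ) 1, χ rcrit ≤ χ r)
    (M : ℝ → ℝ)
    (hM : ∀ r : ℝ, M r = κ * g (r * f) * m * n * r ^ ((2:ℝ) - 1 / (m:ℝ)) *
      (1 - r ^ ((1:ℝ) / (m:ℝ))) ^ ((1:ℝ) - 1 / (n:ℝ))) :
    StrictAntiOn M (Set.Ico rcrit (1:ℝ)) := by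
  have hmR : (3:ℝ) ≤ (m:ℝ) := by exact_mod_cast hm3
  have hnR : (2:ℝ) ≤ (n:ℝ) := by exact_mod_cast hn
  have hm0 : (0:ℝ) < (m:ℝ) := by linarith
  have hD : (0:ℝ) < 2*(m:ℝ)*(n:ℝ)-1 := by nlinarith
  obtain ⟨c, hcdef⟩ : ∃ c:ℝ, c = (n:ℝ)*(2*(m:ℝ)-1)/(2*(m:ℝ)*(n:ℝ)-1) := ⟨_, rfl⟩
  have hc0 : 0 < c := by rw [hcdef]; apply div_pos <;> nlinarith
  have hc1 : c < 1 := by rw [hcdef, div_lt_one hD]; nlinarith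
  -- basic rpow facts
  have hpowm : ∀ r : ℝ, 0 < r → (r ^ ((1:ℝ)/(m:ℝ)))^m = r := by
    intro r hr
    rw [← Real.rpow_natCast (r ^ ((1:ℝ)/(m:ℝ))) m, ← Real.rpow_mul hr.le,
      one_div_mul_cancel (ne_of_gt hm0), Real.rpow_one]
  have hrootm : (c^m) ^ ((1:ℝ)/(m:ℝ)) = c := by
    rw [← Real.rpow_natCast c m, ← Real.rpow_mul hc0.le,
      mul_one_div_cancel (ne_of_gt hm0), Real.rpow_one]
  have hcm0 : 0 < c^m := pow_pos hc0 m
  have hcm1 : c^m ≤ 1 := pow_le_one₀ hc0.le hc1.le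
  -- Step 1 : c^m ≤ rcrit
  have hstep1 : c^m ≤ rcrit := by
    by_contra hcon
    push_neg at hcon
    set φ : ℝ → ℝ := fun u : ℝ => (1 - (1-u) ^ ((1:ℝ)/(n:ℝ))) / u^m with hφdef
    have hu0 : rcrit ^ ((1:ℝ)/(m:ℝ)) < c := by
      calc rcrit ^ ((1:ℝ)/(m:ℝ)) < (c^m) ^ ((1:ℝ)/(m:ℝ)) :=
            Real.rpow_lt_rpow hrc.1.le hcon (by positivity)
        _ = c := hrootm
    have hu0p : 0 < rcrit ^ ((1:ℝ)/(m:ℝ)) := Real.rpow_pos_of_pos hrc.1 _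
    have hanti := auxL2 m n hm3 hn
    rw [← hcdef] at hanti
    have hlt := hanti (Set.mem_Ioc.2 ⟨hu0p, hu0.le⟩) (Set.mem_Ioc.2 ⟨hc0, le_refl c⟩) hu0
    -- hlt : φ c < φ (rcrit^(1/m))
    have hχ1 : χ rcrit = φ (rcrit ^ ((1:ℝ)/(m:ℝ))) := by
      rw [hχ rcrit (Set.mem_Ioc.2 ⟨hrc.1, hrc.2.le⟩), hφdef]
      simp only
      rw [hpowm rcrit hrc.1]
    have hχ2 : χ (c^m) = φ c := by
      rw [hχ (c^m) (Set.mem_Ioc.2 ⟨hcm0, hcm1⟩), hφdef]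
      simp only
      rw [hrootm]
    have := hmin (c^m) (Set.mem_Ioc.2 ⟨hcm0, hcm1⟩)
    rw [hχ1, hχ2] at *
    linarith
  -- Step 2 : strict antitonicity
  intro r1 hr1 r2 hr2 h12
  obtain ⟨hr1c, hr11⟩ := hr1
  obtain ⟨hr2c, hr21⟩ := hr2
  have hr10 : 0 < r1 := lt_of_lt_of_le hrc.1 hr1c
  have hr20 : 0 < r2 := lt_of_lt_of_le hrc.1 hr2c
  -- u values
  set u1 : ℝ := r1 ^ ((1:ℝ)/(m:ℝ)) with hu1def
  set u2 : ℝ := r2 ^ ((1:ℝ)/(m:ℝ)) with hu2def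
  have hcu1 : c ≤ u1 := by
    calc c = (c^m) ^ ((1:ℝ)/(m:ℝ)) := hrootm.symm
      _ ≤ u1 := Real.rpow_le_rpow hcm0.le (le_trans hstep1 hr1c) (by positivity)
  have hcu2 : c ≤ u2 := by
    calc c = (c^m) ^ ((1:ℝ)/(m:ℝ)) := hrootm.symm
      _ ≤ u2 := Real.rpow_le_rpow hcm0.le (le_trans hstep1 hr2c) (by positivity)
  have hu11 : u1 < 1 := Real.rpow_lt_one hr10.le hr11 (by positivity)
  have hu21 : u2 < 1 := Real.rpow_lt_one hr20.le hr21 (by positivity)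
  have hu12 : u1 < u2 := Real.rpow_lt_rpow hr10.le h12 (by positivity)
  -- H values
  set H : ℝ → ℝ := fun u : ℝ => u^(2*m-1) * (1-u) ^ ((1:ℝ) - 1/(n:ℝ)) with hHdef
  have hHanti := auxL1 m n hm3 hn
  rw [← hcdef] at hHanti
  have hHlt : H u2 < H u1 :=
    hHanti (Set.mem_Icc.2 ⟨hcu1, hu11.le⟩) (Set.mem_Icc.2 ⟨hcu2, hu21.le⟩) hu12
  have hH2pos : 0 < H u2 := by
    rw [hHdef]
    have hu20 : 0 < u2 := lt_of_lt_of_le hc0 hcu2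
    have := Real.rpow_pos_of_pos (show (0:ℝ) < 1 - u2 by linarith) ((1:ℝ) - 1/(n:ℝ))
    positivity
  -- g values
  have hrf1 : r1 * f ∈ Set.Icc (0:ℝ) 1 := by
    constructor
    · exact le_of_lt (mul_pos hr10 hf.1)
    · nlinarith [hf.1, hf.2]
  have hrf2 : r2 * f ∈ Set.Icc (0:ℝ) 1 := by
    constructor
    · exact le_of_lt (mul_pos hr20 hf.1)
    · nlinarith [hf.1, hf.2]
  have hglt : g (r2 * f) < g (r1 * f) :=
    hganti hrf1 hrf2 (by nlinarith [hf.1])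
  have hg2pos : 0 < g (r2 * f) := hgpos _ hrf2
  -- rewrite M
  have hA : ∀ r : ℝ, 0 < r → r ^ ((2:ℝ) - 1/(m:ℝ)) = (r ^ ((1:ℝ)/(m:ℝ)))^(2*m-1) := by
    intro r hr
    rw [← Real.rpow_natCast (r ^ ((1:ℝ)/(m:ℝ))) (2*m-1), ← Real.rpow_mul hr.le]
    congr 1
    push_cast [Nat.cast_sub (by omega : 1 ≤ 2*m)]
    field_simp
  have hM1 : M r1 = (κ * m * n) * (g (r1*f) * H u1) := by
    rw [hM r1, hA r1 hr10, hHdef]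
    simp only [hu1def]
    ring
  have hM2 : M r2 = (κ * m * n) * (g (r2*f) * H u2) := by
    rw [hM r2, hA r2 hr20, hHdef]
    simp only [hu2def]
    ring
  rw [hM1, hM2]
  have hκmn : 0 < κ * m * n := by positivity
  apply mul_lt_mul_of_pos_left _ hκmn
  exact mul_lt_mul'' hglt hHlt hg2pos.le hH2pos.le
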